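/- Let q ≥ 1 and let φ : ℝ^{q(q+1)/2} → ℝ^{q(q+1)/2} be the map φ(x) := vech( Λ(x)·Λ(x)ᵀ ), where Λ(x) denotes the unique lower-triangular q×q real matrix with vech(Λ(x)) = x. Then φ is differentiable at every x, and its derivative at x is the linear map h ↦ 𝓛_q·(I_{q²} + K_{q,q})·(Λ(x) ⊗ I_q)·𝓛_qᵀ·h; equivalently, the Jacobian matrix of vech(D) with respect to vech(Λ) under the Cholesky parameterization D = Λ·Λᵀ equals 𝓛_q·(I_{q²} + K_{q,q})·(Λ ⊗ I_q)·𝓛_qᵀ. -/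

import Mathlib

open Matrix

/-- Column-major vectorization of a matrix. -/
def vec {α β R : Type*} (A : Matrix α β R) : β × α → R := fun p => A p.2 p.1

/-- Index type for the half-vectorization of a `q × q` matrix: pairs `(j, i)`
(column `j`, row `i`) lying on or below the diagonal, i.e. with `j ≤ i`. -/
abbrev VechIdx (q : ℕ) := { p : Fin q × Fin q // p.1 ≤ p.2 }

/-- Half-vectorization: stacks the entries of `A` on and below the diagonal column by column. -/
def vech {R : Type*} {q : ℕ} (A : Matrix (Fin q) (Fin q) R) : VechIdx q → R :=
  fun p => A p.1.2 p.1.1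

/-- The elimination matrix `𝓛_q`: the unique zero–one `(q(q+1)/2) × q²` matrix with
`𝓛_q · vec A = vech A` for every `q × q` matrix `A`. -/
def elim (q : ℕ) : Matrix (VechIdx q) (Fin q × Fin q) ℝ := fun w v =>
  if w.1 = v then 1 else 0

/-- The commutation matrix `K_{q,q}`: the unique `q² × q²` matrix with
`K_{q,q} · vec A = vec Aᵀ` for every `q × q` matrix `A` (column-major `vec`). -/
def commMat (q : ℕ) : Matrix (Fin q × Fin q) (Fin q × Fin q) ℝ := fun a b =>
  if a.1 = b.2 ∧ a.2 = b.1 then 1 else 0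

/-- The unique lower-triangular matrix `Λ(x)` whose half-vectorization is `x`. -/
def unvechL {q : ℕ} (x : VechIdx q → ℝ) : Matrix (Fin q) (Fin q) ℝ := fun i j =>
  if h : j ≤ i then x ⟨(j, i), h⟩ else 0

/-- The map `φ(x) = vech(Λ(x) Λ(x)ᵀ)`, with `Λ(x)` the unique
lower-triangular matrix having `vech(Λ(x)) = x`, is differentiable everywhere, and its
derivative at `x` is `h ↦ 𝓛_q (I_{q²} + K_{q,q}) (Λ(x) ⊗ I_q) 𝓛_qᵀ h`; i.e. the Jacobian of
`vech(D)` with respect to `vech(Λ)` under the Cholesky parameterization `D = Λ Λᵀ` is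
`𝓛_q (I_{q²} + K_{q,q}) (Λ ⊗ I_q) 𝓛_qᵀ`. -/

/- Auxiliary lemmas -/
lemma elimT_mulVec {q : ℕ} (h : VechIdx q → ℝ) :
    (elim q)ᵀ.mulVec h = _root_.vec (unvechL h) := by
  classical
  funext p
  obtain ⟨a, b⟩ := p
  simp only [Matrix.mulVec, dotProduct, transpose_apply, elim, _root_.vec, unvechL, ite_mul, one_mul,
    zero_mul]
  by_cases hab : a ≤ b
  · rw [dif_pos hab, Finset.sum_eq_single (⟨(a, b), hab⟩ : VechIdx q)]
    · simp
    · intro w _ hw; rw [if_neg]; intro hc; exact hw (Subtype.ext hc)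
    · simp
  · rw [dif_neg hab, Finset.sum_eq_zero]
    intro w _; rw [if_neg]; intro hc
    apply hab; have := w.2; rw [hc] at this; exact this

lemma kron_mulVec_vec {q : ℕ} (L A : Matrix (Fin q) (Fin q) ℝ) :
    (kroneckerMap (· * ·) L (1 : Matrix (Fin q) (Fin q) ℝ)).mulVec (_root_.vec A) = _root_.vec (A * Lᵀ) := by
  classical
  funext p
  obtain ⟨a, b⟩ := p
  simp only [Matrix.mulVec, dotProduct, kroneckerMap_apply, _root_.vec, Matrix.mul_apply,
    Matrix.one_apply, Fintype.sum_prod_type, transpose_apply, mul_ite, mul_one, mul_zero,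
    ite_mul, zero_mul]
  rw [Finset.sum_congr rfl (fun c _ => Finset.sum_ite_eq (Finset.univ) b (fun d => L a c * A d c))]
  simp [mul_comm]

lemma commMat_mulVec_vec {q : ℕ} (M : Matrix (Fin q) (Fin q) ℝ) :
    (commMat q).mulVec (_root_.vec M) = _root_.vec Mᵀ := by
  classical
  funext p
  obtain ⟨a, b⟩ := p
  simp only [Matrix.mulVec, dotProduct, commMat, _root_.vec, Fintype.sum_prod_type, transpose_apply,
    ite_and, ite_mul, one_mul, zero_mul]
  rw [Finset.sum_congr rfl
    (fun c _ => Finset.sum_ite_eq Finset.univ a (fun d => if b = c then M d c else 0))]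
  simp

lemma elim_mulVec_vec {q : ℕ} (M : Matrix (Fin q) (Fin q) ℝ) :
    (elim q).mulVec (_root_.vec M) = vech M := by
  classical
  funext w
  simp only [Matrix.mulVec, dotProduct, elim, vech, _root_.vec, ite_mul, one_mul, zero_mul]
  rw [Finset.sum_eq_single w.1]
  · simp
  · intro v _ hv; rw [if_neg (fun hc => hv hc.symm)]
  · simp

section
variable {q : ℕ}

lemma unvechL_add (h h' : VechIdx q → ℝ) :
    unvechL (h + h') = unvechL h + unvechL h' := by
  funext i j
  simp only [unvechL, Matrix.add_apply, Pi.add_apply]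
  split <;> simp

lemma unvechL_smul (c : ℝ) (h : VechIdx q → ℝ) :
    unvechL (c • h) = c • unvechL h := by
  funext i j
  simp only [unvechL, Matrix.smul_apply, Pi.smul_apply, smul_eq_mul]
  split <;> simp

lemma vech_add (A B : Matrix (Fin q) (Fin q) ℝ) : vech (A + B) = vech A + vech B := rfl

/-- the candidate derivative as a linear map -/
def dlin (x : VechIdx q → ℝ) : (VechIdx q → ℝ) →ₗ[ℝ] (VechIdx q → ℝ) where
  toFun h := vech (unvechL h * (unvechL x)ᵀ + unvechL x * (unvechL h)ᵀ)
  map_add' h h' := by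
    simp [unvechL_add, add_mul, mul_add, transpose_add, vech_add]
    funext w; simp [vech]; ring
  map_smul' c h := by
    simp [unvechL_smul, transpose_smul, smul_mul_assoc, mul_smul_comm]
    funext w; simp [vech]; ring

/-- entrywise derivative CLM -/
def entD (i k : Fin q) : (VechIdx q → ℝ) →L[ℝ] ℝ :=
  if h : k ≤ i then ContinuousLinearMap.proj (⟨(k, i), h⟩ : VechIdx q) else 0

lemma entD_apply (i k : Fin q) (h : VechIdx q → ℝ) : entD i k h = unvechL h i k := by
  simp only [entD, unvechL]
  split <;> simp

lemma hasFDerivAt_ent (i k : Fin q) (x : VechIdx q → ℝ) :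
    HasFDerivAt (fun y : VechIdx q → ℝ => unvechL y i k) (entD i k) x := by
  by_cases h : k ≤ i
  · simp only [unvechL, dif_pos h, entD, dif_pos h]
    exact hasFDerivAt_apply (⟨(k, i), h⟩ : VechIdx q) x
  · simp only [unvechL, dif_neg h, entD, dif_neg h]
    exact hasFDerivAt_const 0 x

lemma hasFDerivAt_phi (x : VechIdx q → ℝ) :
    HasFDerivAt (fun y : VechIdx q → ℝ => vech (unvechL y * (unvechL y)ᵀ))
      (LinearMap.toContinuousLinearMap (dlin x)) x := by
  apply hasFDerivAt_pi''
  intro w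
  obtain ⟨⟨j, i⟩, hji⟩ := w
  have hfun : (fun y : VechIdx q → ℝ => vech (unvechL y * (unvechL y)ᵀ) ⟨(j, i), hji⟩)
      = fun y => ∑ k, unvechL y i k * unvechL y j k := by
    funext y
    simp [vech, Matrix.mul_apply]
  have hD : HasFDerivAt (fun y : VechIdx q → ℝ => ∑ k, unvechL y i k * unvechL y j k)
      (∑ k, (unvechL x i k • entD j k + unvechL x j k • entD i k)) x := by
    apply HasFDerivAt.fun_sum
    intro k _
    exact (hasFDerivAt_ent i k x).mul (hasFDerivAt_ent j k x)
  have heq : (ContinuousLinearMap.proj (⟨(j, i), hji⟩ : VechIdx q)).comp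
      (LinearMap.toContinuousLinearMap (dlin x))
      = ∑ k, (unvechL x i k • entD j k + unvechL x j k • entD i k) := by
    ext h
    simp only [ContinuousLinearMap.comp_apply, ContinuousLinearMap.proj_apply,
      LinearMap.coe_toContinuousLinearMap', dlin, LinearMap.coe_mk, AddHom.coe_mk,
      ContinuousLinearMap.coe_sum', Finset.sum_apply, ContinuousLinearMap.add_apply,
      ContinuousLinearMap.coe_smul', Pi.smul_apply, entD_apply, smul_eq_mul]
    simp only [vech, Matrix.add_apply, Matrix.mul_apply, transpose_apply]
    rw [← Finset.sum_add_distrib]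
    apply Finset.sum_congr rfl
    intro k _
    ring
  rw [heq]
  exact hfun ▸ hD
end

theorem stmt10 (q : ℕ) (hq : 1 ≤ q)
    (φ : (VechIdx q → ℝ) → (VechIdx q → ℝ))
    (hφ : φ = fun x => vech (unvechL x * (unvechL x)ᵀ)) :
    ∀ x : VechIdx q → ℝ,
      DifferentiableAt ℝ φ x ∧
      ∀ h : VechIdx q → ℝ,
        fderiv ℝ φ x h =
          (elim q * (1 + commMat q) *
            kroneckerMap (· * ·) (unvechL x) (1 : Matrix (Fin q) (Fin q) ℝ) *
            (elim q)ᵀ).mulVec h := by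
  intro x
  have key : HasFDerivAt φ (LinearMap.toContinuousLinearMap (dlin x)) x := by
    rw [hφ]; exact hasFDerivAt_phi x
  refine ⟨key.differentiableAt, fun h => ?_⟩
  rw [key.fderiv]
  rw [← Matrix.mulVec_mulVec, ← Matrix.mulVec_mulVec, ← Matrix.mulVec_mulVec,
    elimT_mulVec, kron_mulVec_vec, Matrix.add_mulVec, Matrix.one_mulVec,
    commMat_mulVec_vec, Matrix.mulVec_add, elim_mulVec_vec, elim_mulVec_vec]
  have : (unvechL h * (unvechL x)ᵀ)ᵀ = unvechL x * (unvechL h)ᵀ := by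
    rw [transpose_mul, transpose_transpose]
  rw [this, ← vech_add]
  rfl
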